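/- Let σ > 0, c₁ ≠ 0, γ ≠ 0, set β = (c₁+1)/c₁ and κ = σ²/(2γc₁²), assume κ·(κ + 4(β−1)) ≥ 0, and let k be a root of k² − (2β + κ)·k + (β² + κ) = 0, i.e. k = β + κ/2 ± (1/2)·√(κ(κ + 4(β−1))). Assume d₁ ≠ 0, k ≠ 0 and k ≠ β. Then the function u(S,t) = d₁·S^k·e^{−γkt} + d₂ (for any d₂ ∈ ℝ) satisfies u_S − c₁·S·u_SS ≠ 0 for all S > 0 and solves the special-model PDE u_t + (1/2)·σ²S²·u_SS·u_S² / (u_S − c₁·S·u_SS)² = 0 for all S > 0, t ∈ ℝ. (These invariant solutions describe power derivative products.) -/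

import Mathlib

open Real Set

/-- Partial derivative of `u(S,t)` with respect to `S`. -/
noncomputable def pS (u : ℝ → ℝ → ℝ) (S t : ℝ) : ℝ := deriv (fun s => u s t) S

/-- Second partial derivative of `u(S,t)` with respect to `S`. -/
noncomputable def pSS (u : ℝ → ℝ → ℝ) (S t : ℝ) : ℝ := deriv (fun s => pS u s t) S

/-- Partial derivative of `u(S,t)` with respect to `t`. -/
noncomputable def pt (u : ℝ → ℝ → ℝ) (S t : ℝ) : ℝ := deriv (fun τ => u S τ) t

/-- Invariant (power-option) solutions of the special model: with
`β = (c₁+1)/c₁`, `κ = σ²/(2γc₁²)` and `k` a root of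
`k² − (2β+κ)k + (β²+κ) = 0` (with `d₁ ≠ 0`, `k ≠ 0`, `k ≠ β`), the function
`u(S,t) = d₁ S^k e^{−γkt} + d₂` has nonvanishing denominator
`u_S − c₁ S u_SS ≠ 0` and solves the special-model PDE
`u_t + (1/2) σ² S² u_SS u_S² / (u_S − c₁ S u_SS)² = 0` for all `S > 0`, `t`. -/
lemma pow_deriv (k c d : ℝ) (S : ℝ) (hS : 0 < S) :
    HasDerivAt (fun s : ℝ => c * s ^ k + d) (c * k * S ^ (k - 1)) S := by
  have h := (Real.hasDerivAt_rpow_const (x := S) (p := k) (Or.inl hS.ne'))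
  have := (h.const_mul c).add_const d
  convert this using 1
  all_goals first | rfl | ring

theorem power_option_solutions_special_model
    (σ c₁ γ β κ : ℝ) (hσ : 0 < σ) (hc₁ : c₁ ≠ 0) (hγ : γ ≠ 0)
    (hβ : β = (c₁ + 1) / c₁) (hκ : κ = σ ^ 2 / (2 * γ * c₁ ^ 2))
    (hdisc : 0 ≤ κ * (κ + 4 * (β - 1)))
    (k : ℝ) (hk : k ^ 2 - (2 * β + κ) * k + (β ^ 2 + κ) = 0)
    (hk0 : k ≠ 0) (hkβ : k ≠ β)
    (d₁ d₂ : ℝ) (hd₁ : d₁ ≠ 0)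
    (u : ℝ → ℝ → ℝ)
    (hu : u = fun S t => d₁ * S ^ k * Real.exp (-γ * k * t) + d₂) :
    ∀ S ∈ Set.Ioi (0 : ℝ), ∀ t : ℝ,
      pS u S t - c₁ * S * pSS u S t ≠ 0 ∧
      pt u S t + (1 / 2) * σ ^ 2 * S ^ 2 * pSS u S t * (pS u S t) ^ 2 /
        (pS u S t - c₁ * S * pSS u S t) ^ 2 = 0 := by
  intro S hS t
  rw [Set.mem_Ioi] at hS
  set E := Real.exp (-γ * k * t) with hE
  have hEpos : 0 < E := Real.exp_pos _
  have hpS : ∀ s : ℝ, 0 < s → pS u s t = d₁ * E * k * s ^ (k - 1) := by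
    intro s hs
    have h : HasDerivAt (fun x : ℝ => (d₁ * E) * x ^ k + d₂) ((d₁ * E) * k * s ^ (k - 1)) s :=
      pow_deriv k (d₁ * E) d₂ s hs
    have heq : (fun x : ℝ => u x t) = fun x : ℝ => (d₁ * E) * x ^ k + d₂ := by
      funext x; rw [hu]; ring
    rw [pS, heq, h.deriv]
  have hpSS : pSS u S t = d₁ * E * k * (k - 1) * S ^ (k - 2) := by
    have hev : (fun s => pS u s t) =ᶠ[nhds S] (fun s => (d₁ * E * k) * s ^ (k - 1) + 0) := by
      filter_upwards [Ioi_mem_nhds hS] with s hs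
      rw [hpS s hs]; ring
    have h : HasDerivAt (fun s : ℝ => (d₁ * E * k) * s ^ (k - 1) + 0)
        ((d₁ * E * k) * (k - 1) * S ^ (k - 1 - 1)) S := pow_deriv (k - 1) _ 0 S hS
    rw [show k - 1 - 1 = k - 2 by ring] at h
    rw [pSS, hev.deriv_eq, h.deriv]
  have hpt : pt u S t = d₁ * S ^ k * (-γ * k) * E := by
    have h1 : HasDerivAt (fun τ : ℝ => -γ * k * τ) (-γ * k) t := by
      simpa using (hasDerivAt_id t).const_mul (-γ * k)
    have h2 : HasDerivAt (fun τ : ℝ => d₁ * S ^ k * Real.exp (-γ * k * τ) + d₂)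
        (d₁ * S ^ k * (Real.exp (-γ * k * t) * (-γ * k))) t :=
      ((h1.exp).const_mul (d₁ * S ^ k)).add_const d₂
    rw [pt, hu]
    simp only []
    rw [h2.deriv, hE]; ring
  -- nonzero facts
  have hSne : S ≠ 0 := hS.ne'
  have hA : (0:ℝ) < S ^ (k - 1) := Real.rpow_pos_of_pos hS _
  have hrel1 : S ^ (k - 2) = S ^ (k - 1) / S := by
    rw [eq_div_iff hSne, ← Real.rpow_add_one hSne, show k - 2 + 1 = k - 1 by ring]
  have hrel2 : S ^ k = S ^ (k - 1) * S := by
    rw [← Real.rpow_add_one hSne, show k - 1 + 1 = k by ring]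
  have hβk : β - k ≠ 0 := sub_ne_zero.mpr (Ne.symm hkβ)
  have hc₁β : c₁ * β = c₁ + 1 := by rw [hβ]; field_simp
  have hσsq : σ ^ 2 = 2 * γ * c₁ ^ 2 * κ := by
    rw [hκ]; field_simp
  have hD : pS u S t - c₁ * S * pSS u S t = d₁ * k * S ^ (k - 1) * E * (c₁ * (β - k)) := by
    rw [hpS S hS, hpSS, hrel1]
    field_simp
    linear_combination (-1 : ℝ) * hc₁β
  have hDne : pS u S t - c₁ * S * pSS u S t ≠ 0 := by
    rw [hD]
    positivity
  refine ⟨hDne, ?_⟩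
  rw [hD, hpS S hS, hpSS, hpt, hrel1, hrel2]
  have hsub : κ * (k - 1) = (β - k) ^ 2 := by linarith [hk]
  field_simp
  linear_combination (2 * γ * c₁ ^ 2 * d₁ * k * S ^ (k-1) * S * E) * hsub + (d₁ * k * S ^ (k-1) * S * E * (k - 1)) * hσsq
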